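/- Let d ≥ 2 and let σ_star(p) = ρ_{A₁B}(p) ⊗ ρ_{A₂C}(p) be the 3-partite pair-entangled-network state on the star graph in which party A holds two qudits A₁ and A₂ and shares a d-dimensional isotropic state of visibility p with party B (via A₁) and with party C (via A₂). If p ≤ ((1+√2)d − 1)/(d² + 2d − 1), then σ_star(p) is biseparable with respect to the tripartition A|B|C. -/

import Mathlib

open scoped BigOperators

noncomputable section

/-- Projector onto the `d`-dimensional maximally entangled state
`|φ⁺_d⟩ = (1/√d) ∑ᵢ |ii⟩`, as a matrix on `ℂ^d ⊗ ℂ^d`. -/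
def phiPlus (d : ℕ) : Matrix (Fin d × Fin d) (Fin d × Fin d) ℂ :=
  fun x y => if x.1 = x.2 ∧ y.1 = y.2 then (1 / (d : ℂ)) else 0

/-- The `d`-dimensional isotropic state with visibility `p`:
`ρ(p) = p φ⁺_d + (1-p) 𝟙/d²`. -/
def iso (d : ℕ) (p : ℝ) : Matrix (Fin d × Fin d) (Fin d × Fin d) ℂ :=
  (p : ℂ) • phiPlus d +
    (((1 - p) / (d : ℝ) ^ 2 : ℝ) : ℂ) • (1 : Matrix (Fin d × Fin d) (Fin d × Fin d) ℂ)

/-- The (possibly unnormalized) projector `|ψ⟩⟨ψ|` onto a vector `ψ`. -/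
def vecProj {ι : Type} (ψ : ι → ℂ) : Matrix ι ι ℂ :=
  fun i j => ψ i * (starRingEnd ℂ) (ψ j)

/-- A pure tripartite vector factors across the bipartition `A|BC`. -/
def factorsA {α β γ : Type} (ψ : α × β × γ → ℂ) : Prop :=
  ∃ (f : α → ℂ) (g : β × γ → ℂ), ∀ a b c, ψ (a, b, c) = f a * g (b, c)

/-- A pure tripartite vector factors across the bipartition `B|AC`. -/
def factorsB {α β γ : Type} (ψ : α × β × γ → ℂ) : Prop :=
  ∃ (f : β → ℂ) (g : α × γ → ℂ), ∀ a b c, ψ (a, b, c) = f b * g (a, c)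

/-- A pure tripartite vector factors across the bipartition `C|AB`. -/
def factorsC {α β γ : Type} (ψ : α × β × γ → ℂ) : Prop :=
  ∃ (f : γ → ℂ) (g : α × β → ℂ), ∀ a b c, ψ (a, b, c) = f c * g (a, b)

/-- A tripartite density matrix (parties `A`, `B`, `C`) is biseparable if it is a finite
convex combination of projectors onto normalized pure states, each of which factors
across one of the three bipartitions `A|BC`, `B|AC`, `C|AB`. -/
def Bisep3 {α β γ : Type} [Fintype α] [Fintype β] [Fintype γ]
    (ρ : Matrix (α × β × γ) (α × β × γ) ℂ) : Prop :=
  ∃ (k : ℕ) (w : Fin k → ℝ) (ψ : Fin k → α × β × γ → ℂ),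
    (∀ t, 0 ≤ w t) ∧ (∑ t, w t = 1) ∧
    (∀ t, factorsA (ψ t) ∨ factorsB (ψ t) ∨ factorsC (ψ t)) ∧
    (∀ t, ∑ x, Complex.normSq (ψ t x) = 1) ∧
    ρ = ∑ t, (w t : ℂ) • vecProj (ψ t)

/-- The 3-partite star PEN state `σ_star(p) = ρ_{A₁B}(p) ⊗ ρ_{A₂C}(p)`.
Party `A` holds the pair `(a₁, a₂)`, party `B` holds `b`, party `C` holds `c`;
the global index is `((a₁, a₂), b, c)`. -/
def sigmaStar (d : ℕ) (p : ℝ) :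
    Matrix ((Fin d × Fin d) × Fin d × Fin d) ((Fin d × Fin d) × Fin d × Fin d) ℂ :=
  fun x y =>
    iso d p (x.1.1, x.2.1) (y.1.1, y.2.1) * iso d p (x.1.2, x.2.2) (y.1.2, y.2.2)

namespace StarBisep


/-- primitive cube root of unity -/
noncomputable def w3 : ℂ := Complex.exp (2 * Real.pi * Complex.I / 3)

lemma w3_pow_three : w3 ^ 3 = 1 := by
  have h : w3 ^ 3 = Complex.exp ((3 : ℕ) * (2 * Real.pi * Complex.I / 3)) := by
    rw [w3, ← Complex.exp_nat_mul]
  rw [h]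
  have : ((3 : ℕ) : ℂ) * (2 * Real.pi * Complex.I / 3) = 2 * Real.pi * Complex.I := by
    push_cast; ring
  rw [this, Complex.exp_two_pi_mul_I]

lemma w3_ne_one : w3 ≠ 1 := by
  intro h
  rw [w3, Complex.exp_eq_one_iff] at h
  obtain ⟨n, hn⟩ := h
  have hpi : (Real.pi : ℂ) ≠ 0 := by exact_mod_cast Real.pi_ne_zero
  have h3 : (2 * Real.pi * Complex.I : ℂ) ≠ 0 := by
    simp [hpi, Complex.I_ne_zero]
  have : (2 * Real.pi * Complex.I : ℂ) * (1/3) = (2 * Real.pi * Complex.I) * n := by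
    rw [mul_comm ((n:ℂ)) _] at hn
    rw [← hn]; ring
  have h13 : ((1:ℂ)/3) = n := mul_left_cancel₀ h3 this
  have h1 : (1:ℂ) = 3 * n := by
    field_simp at h13
    linear_combination h13
  have : (1:ℤ) = 3 * n := by exact_mod_cast h1
  omega

lemma w3_quad : w3 ^ 2 + w3 + 1 = 0 := by
  have h : (w3 - 1) * (w3 ^ 2 + w3 + 1) = 0 := by
    linear_combination w3_pow_three
  rcases mul_eq_zero.mp h with h | h
  · exact absurd (sub_eq_zero.mp h) w3_ne_one
  · exact h

lemma w3_pow_mod (m : ℕ) : w3 ^ (m % 3) = w3 ^ m := by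
  conv_rhs => rw [← Nat.div_add_mod m 3, pow_add, pow_mul, w3_pow_three, one_pow, one_mul]

/-- additive character of `ZMod 3` -/
noncomputable def ec (z : ZMod 3) : ℂ := w3 ^ z.val

lemma ec_zero : ec 0 = 1 := by simp [ec]

lemma ec_add (x y : ZMod 3) : ec (x + y) = ec x * ec y := by
  rw [ec, ec, ec, ZMod.val_add, w3_pow_mod, pow_add]

lemma abs_ec (z : ZMod 3) : ‖ec z‖ = 1 := by
  have habs : ‖w3‖ = 1 := by
    rw [w3, Complex.norm_exp]
    have : (2 * Real.pi * Complex.I / 3 : ℂ).re = 0 := by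
      simp [Complex.div_re]
    rw [this, Real.exp_zero]
  rw [ec, norm_pow, habs, one_pow]

lemma normSq_ec (z : ZMod 3) : Complex.normSq (ec z) = 1 := by
  rw [Complex.normSq_eq_norm_sq, abs_ec]; norm_num

lemma ec_mul_conj (z : ZMod 3) : ec z * (starRingEnd ℂ) (ec z) = 1 := by
  rw [Complex.mul_conj, normSq_ec]; norm_num

lemma ec_ne_zero (z : ZMod 3) : ec z ≠ 0 := by
  intro h
  have := ec_mul_conj z
  rw [h] at this; simp at this

lemma conj_ec (z : ZMod 3) : (starRingEnd ℂ) (ec z) = ec (-z) := by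
  have h1 : ec z * ec (-z) = 1 := by
    rw [← ec_add]; simp [ec_zero]
  have h2 := ec_mul_conj z
  exact mul_left_cancel₀ (ec_ne_zero z) (by rw [h2, h1])

lemma ec_one : ec 1 = w3 := by
  have : (1 : ZMod 3).val = 1 := by decide
  rw [ec, this, pow_one]

lemma ec_two : ec 2 = w3 ^ 2 := by
  have : (2 : ZMod 3).val = 2 := by decide
  rw [ec, this]

lemma sum_ec (c : ZMod 3) : ∑ z : ZMod 3, ec (c * z) = if c = 0 then 3 else 0 := by
  have huniv : (Finset.univ : Finset (ZMod 3)) = {0, 1, 2} := by decide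
  rw [huniv, Finset.sum_insert (by decide), Finset.sum_insert (by decide),
    Finset.sum_singleton]
  have hc : ∀ x : ZMod 3, x = 0 ∨ x = 1 ∨ x = 2 := by decide
  rcases hc c with h | h | h <;> subst h
  · norm_num [ec_zero, show ((0:ZMod 3) * 1 = 0) from by decide,
      show ((0:ZMod 3) * 2 = 0) from by decide]
  · rw [show ((1:ZMod 3) * 0 = 0) from by decide, show ((1:ZMod 3) * 1 = 1) from by decide,
      show ((1:ZMod 3) * 2 = 2) from by decide, if_neg (by decide : (1:ZMod 3) ≠ 0),
      ec_zero, ec_one, ec_two]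
    linear_combination w3_quad
  · rw [show ((2:ZMod 3) * 0 = 0) from by decide, show ((2:ZMod 3) * 1 = 2) from by decide,
      show ((2:ZMod 3) * 2 = 1) from by decide, if_neg (by decide : (2:ZMod 3) ≠ 0),
      ec_zero, ec_one, ec_two]
    linear_combination w3_quad




lemma ec_sum {α : Type*} (s : Finset α) (f : α → ZMod 3) :
    ec (∑ i ∈ s, f i) = ∏ i ∈ s, ec (f i) := by
  induction s using Finset.cons_induction with
  | empty => simp [ec_zero]
  | cons a s ha ih => rw [Finset.sum_cons, Finset.prod_cons, ec_add, ih]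

/-- indicator in `ZMod 3` -/
def indZ {C : Type*} [DecidableEq C] (a c : C) : ZMod 3 := if c = a then 1 else 0

lemma indZ_self {C : Type*} [DecidableEq C] (a : C) : indZ a a = 1 := by simp [indZ]

lemma indZ_ne {C : Type*} [DecidableEq C] {a c : C} (h : ¬ c = a) : indZ a c = 0 := by
  simp [indZ, h]

lemma keySum {C : Type*} [Fintype C] [DecidableEq C] (c₁ c₂ c₃ c₄ : C) :
    ∑ κ : C → ZMod 3, ec (κ c₁ - κ c₂ - κ c₃ + κ c₄)
      = if (c₁ = c₂ ∧ c₃ = c₄) ∨ (c₁ = c₃ ∧ c₂ = c₄) then (3:ℂ) ^ (Fintype.card C) else 0 := by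
  classical
  set n : C → ZMod 3 := fun c => indZ c₁ c - indZ c₂ c - indZ c₃ c + indZ c₄ c with hn
  have hnc : ∀ c, n c = indZ c₁ c - indZ c₂ c - indZ c₃ c + indZ c₄ c := fun c => rfl
  -- step 1: pointwise rewriting of the exponent
  have hpt : ∀ κ : C → ZMod 3, κ c₁ - κ c₂ - κ c₃ + κ c₄ = ∑ c : C, n c * κ c := by
    intro κ
    have h : ∀ a : C, ∑ c : C, indZ a c * κ c = κ a := by
      intro a
      have he : ∀ c : C, indZ a c * κ c = if c = a then κ c else 0 := by
        intro c; by_cases h : c = a <;> simp [indZ, h]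
      calc ∑ c : C, indZ a c * κ c = ∑ c : C, if c = a then κ c else 0 :=
            Finset.sum_congr rfl (fun c _ => he c)
        _ = κ a := by
            rw [Finset.sum_ite_eq' Finset.univ a κ, if_pos (Finset.mem_univ a)]
    calc κ c₁ - κ c₂ - κ c₃ + κ c₄
        = (∑ c : C, indZ c₁ c * κ c) - (∑ c : C, indZ c₂ c * κ c)
          - (∑ c : C, indZ c₃ c * κ c) + (∑ c : C, indZ c₄ c * κ c) := by
          rw [h, h, h, h]
      _ = ∑ c : C, (indZ c₁ c * κ c - indZ c₂ c * κ c - indZ c₃ c * κ c + indZ c₄ c * κ c) := by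
          rw [Finset.sum_add_distrib, Finset.sum_sub_distrib, Finset.sum_sub_distrib]
      _ = ∑ c : C, n c * κ c := Finset.sum_congr rfl (fun c _ => by rw [hnc]; ring)
  -- step 2: factor the sum
  have hfac : ∑ κ : C → ZMod 3, ec (κ c₁ - κ c₂ - κ c₃ + κ c₄)
      = ∏ c : C, ∑ z : ZMod 3, ec (n c * z) := by
    rw [Finset.prod_univ_sum, Fintype.piFinset_univ]
    exact Finset.sum_congr rfl (fun κ _ => by rw [hpt κ, ec_sum])
  rw [hfac]
  -- step 3: characterize vanishing
  have hiff : (∀ c, n c = 0) ↔ ((c₁ = c₂ ∧ c₃ = c₄) ∨ (c₁ = c₃ ∧ c₂ = c₄)) := by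
    constructor
    · intro hall
      by_cases h12 : c₁ = c₂
      · by_cases h34 : c₃ = c₄
        · exact Or.inl ⟨h12, h34⟩
        · exfalso
          have h3 := hall c₃
          rw [hnc c₃, h12, indZ_self, indZ_ne h34] at h3
          have he : indZ c₂ c₃ - indZ c₂ c₃ - 1 + 0 = (-1 : ZMod 3) := by ring
          rw [he] at h3
          exact absurd h3 (by decide)
      · by_cases h13 : c₁ = c₃
        · by_cases h24 : c₂ = c₄
          · exact Or.inr ⟨h13, h24⟩
          · exfalso
            have h2 := hall c₂
            rw [hnc c₂, indZ_ne (fun hh : c₂ = c₁ => h12 hh.symm), indZ_self,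
              indZ_ne (show ¬ c₂ = c₃ from fun hh => h12 (h13.trans hh.symm)),
              indZ_ne h24] at h2
            exact absurd h2 (by decide)
        · exfalso
          have h1 := hall c₁
          rw [hnc c₁, indZ_self, indZ_ne h12, indZ_ne h13] at h1
          by_cases h14 : c₁ = c₄
          · rw [show indZ c₄ c₁ = 1 from by rw [indZ, if_pos h14]] at h1
            exact absurd h1 (by decide)
          · rw [indZ_ne h14] at h1
            exact absurd h1 (by decide)
    · intro hc c
      rw [hnc]
      rcases hc with ⟨h1, h2⟩ | ⟨h1, h2⟩
      · subst h1; subst h2; ring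
      · subst h1; subst h2; ring
  by_cases hcond : (c₁ = c₂ ∧ c₃ = c₄) ∨ (c₁ = c₃ ∧ c₂ = c₄)
  · rw [if_pos hcond]
    have hall := hiff.mpr hcond
    calc ∏ c : C, ∑ z : ZMod 3, ec (n c * z)
        = ∏ _c : C, (3:ℂ) := by
          refine Finset.prod_congr rfl (fun c _ => ?_)
          rw [sum_ec, if_pos (hall c)]
      _ = (3:ℂ) ^ (Fintype.card C) := by
          rw [Finset.prod_const, Finset.card_univ]
  · rw [if_neg hcond]
    have : ∃ c, n c ≠ 0 := by
      by_contra h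
      push_neg at h
      exact hcond (hiff.mp h)
    obtain ⟨c₀, hc₀⟩ := this
    refine Finset.prod_eq_zero (Finset.mem_univ c₀) ?_
    rw [sum_ec, if_neg hc₀]

lemma ec_mul_conj_ec (z w : ZMod 3) : ec z * (starRingEnd ℂ) (ec w) = ec (z - w) := by
  rw [conj_ec, ← ec_add, sub_eq_add_neg]

/-- complex indicator of a decidable proposition -/
def cind (P : Prop) [Decidable P] : ℂ := if P then 1 else 0

lemma cind_mul (P : Prop) [Decidable P] (x : ℂ) : cind P * x = if P then x else 0 := by
  by_cases h : P <;> simp [cind, h]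

lemma conj_cind (P : Prop) [Decidable P] : (starRingEnd ℂ) (cind P) = cind P := by
  by_cases h : P <;> simp [cind, h]

lemma cind_mul_cind (P Q : Prop) [Decidable P] [Decidable Q] :
    cind P * cind Q = cind (P ∧ Q) := by
  by_cases h : P <;> by_cases h' : Q <;> simp [cind, h, h']

lemma cind_congr {P Q : Prop} [Decidable P] [Decidable Q] (h : P ↔ Q) : cind P = cind Q := by
  by_cases hp : P
  · rw [cind, if_pos hp, cind, if_pos (h.mp hp)]
  · rw [cind, if_neg hp, cind, if_neg (fun hq => hp (h.mpr hq))]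

lemma ite_or_cind (A B : Prop) [Decidable A] [Decidable B] (K : ℂ) :
    (if A ∨ B then K else 0) = K * (cind A + cind B - cind (A ∧ B)) := by
  by_cases ha : A <;> by_cases hb : B <;> simp [cind, ha, hb] <;> ring

lemma normSq_cind_mul (P : Prop) [Decidable P] (x : ℂ) :
    Complex.normSq (cind P * x) = (if P then 1 else 0) * Complex.normSq x := by
  by_cases h : P <;> simp [cind, h]

/-- the index type for the tripartite system -/
abbrev I4 (d : ℕ) := (Fin d × Fin d) × Fin d × Fin d

section families
variable (d : ℕ)

/-- `1/√d` as a complex number -/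
def sdI : ℂ := ((Real.sqrt d : ℝ) : ℂ)

lemma conj_sdI : (starRingEnd ℂ) (sdI d) = sdI d := Complex.conj_ofReal _

lemma sdI_sq : sdI d * sdI d = (d : ℂ) := by
  rw [sdI, ← Complex.ofReal_mul, Real.mul_self_sqrt (Nat.cast_nonneg d)]
  norm_cast

-- the atoms
variable {d} in
def cP1 (X Y : I4 d) : ℂ := cind (X.1.1 = X.2.1 ∧ Y.1.1 = Y.2.1)
variable {d} in
def cI1 (X Y : I4 d) : ℂ := cind (X.1.1 = Y.1.1 ∧ X.2.1 = Y.2.1)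
variable {d} in
def cP2 (X Y : I4 d) : ℂ := cind (X.1.2 = X.2.2 ∧ Y.1.2 = Y.2.2)
variable {d} in
def cI2 (X Y : I4 d) : ℂ := cind (X.1.2 = Y.1.2 ∧ X.2.2 = Y.2.2)

/-- the `A|BC` entangled family -/
def psiA (κ : Fin d × Fin d → ZMod 3) (X : I4 d) : ℂ :=
  ((d:ℂ)^2)⁻¹ * ec (κ X.1 - κ X.2)

lemma sumA (X Y : I4 d) :
    ∑ κ : Fin d × Fin d → ZMod 3, psiA d κ X * (starRingEnd ℂ) (psiA d κ Y)
      = (3:ℂ)^(d*d) * ((d:ℂ)^4)⁻¹ *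
        (cP1 X Y * cP2 X Y + cI1 X Y * cI2 X Y
          - cP1 X Y * cP2 X Y * cI1 X Y * cI2 X Y) := by
  have hterm : ∀ κ : Fin d × Fin d → ZMod 3,
      psiA d κ X * (starRingEnd ℂ) (psiA d κ Y)
        = ((d:ℂ)^4)⁻¹ * ec (κ X.1 - κ X.2 - κ Y.1 + κ Y.2) := by
    intro κ
    rw [psiA, psiA, map_mul, map_inv₀, map_pow, Complex.conj_natCast]
    rw [mul_mul_mul_comm, ec_mul_conj_ec]
    congr 1
    · rw [← mul_inv, ← pow_add]
    · congr 1; ring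
  rw [Finset.sum_congr rfl (fun κ _ => hterm κ), ← Finset.mul_sum, keySum X.1 X.2 Y.1 Y.2]
  have hcard : Fintype.card (Fin d × Fin d) = d * d := by simp
  rw [hcard, ite_or_cind]
  have h1 : cind (X.1 = X.2 ∧ Y.1 = Y.2) = cP1 X Y * cP2 X Y := by
    rw [cP1, cP2, cind_mul_cind]
    exact cind_congr (by rw [Prod.ext_iff, Prod.ext_iff]; tauto)
  have h2 : cind (X.1 = Y.1 ∧ X.2 = Y.2) = cI1 X Y * cI2 X Y := by
    rw [cI1, cI2, cind_mul_cind]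
    exact cind_congr (by rw [Prod.ext_iff, Prod.ext_iff]; tauto)
  have h3 : cind ((X.1 = X.2 ∧ Y.1 = Y.2) ∧ X.1 = Y.1 ∧ X.2 = Y.2)
      = cP1 X Y * cP2 X Y * cI1 X Y * cI2 X Y := by
    rw [cP1, cP2, cI1, cI2, cind_mul_cind, cind_mul_cind, cind_mul_cind]
    exact cind_congr (by rw [Prod.ext_iff, Prod.ext_iff, Prod.ext_iff, Prod.ext_iff]; tauto)
  rw [h1, h2, h3]
  ring


/-- the `C|AB` phase family -/
def psiC1 (θ : Fin d → ZMod 3) (X : I4 d) : ℂ :=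
  cind (X.1.1 = X.2.1) * ((sdI d)⁻¹ * (d:ℂ)⁻¹) * ec (θ X.1.2 - θ X.2.2)

/-- the `B|AC` phase family -/
def psiB1 (θ : Fin d → ZMod 3) (X : I4 d) : ℂ :=
  cind (X.1.2 = X.2.2) * ((sdI d)⁻¹ * (d:ℂ)⁻¹) * ec (θ X.1.1 - θ X.2.1)

def psiC2 (i : Fin d) (X : I4 d) : ℂ :=
  cind (X.1.1 = X.2.1) * cind (i = X.1.2) * cind (i = X.2.2) * (sdI d)⁻¹

def psiB2 (i : Fin d) (X : I4 d) : ℂ :=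
  cind (X.1.2 = X.2.2) * cind (i = X.1.1) * cind (i = X.2.1) * (sdI d)⁻¹

def psiC3 (jk : Fin d × Fin d) (X : I4 d) : ℂ :=
  cind (X.1.1 = X.2.1) * cind (jk.1 = X.1.2) * cind (jk.2 = X.2.2) * (sdI d)⁻¹

def psiB3 (jk : Fin d × Fin d) (X : I4 d) : ℂ :=
  cind (X.1.2 = X.2.2) * cind (jk.1 = X.1.1) * cind (jk.2 = X.2.1) * (sdI d)⁻¹

def psi0 (v : I4 d) (X : I4 d) : ℂ := cind (v = X)

def psiDD (ik : Fin d × Fin d) (X : I4 d) : ℂ :=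
  cind (ik.1 = X.1.1) * cind (ik.1 = X.2.1) * cind (ik.2 = X.1.2) * cind (ik.2 = X.2.2)

lemma conj_K : (starRingEnd ℂ) ((sdI d)⁻¹ * (d:ℂ)⁻¹) = (sdI d)⁻¹ * (d:ℂ)⁻¹ := by
  rw [map_mul, map_inv₀, map_inv₀, conj_sdI, Complex.conj_natCast]

lemma K_sq : ((sdI d)⁻¹ * (d:ℂ)⁻¹) * ((sdI d)⁻¹ * (d:ℂ)⁻¹) = ((d:ℂ)^3)⁻¹ := by
  have h1 : (sdI d)⁻¹ * (sdI d)⁻¹ = (d:ℂ)⁻¹ := by rw [← mul_inv, sdI_sq]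
  calc ((sdI d)⁻¹ * (d:ℂ)⁻¹) * ((sdI d)⁻¹ * (d:ℂ)⁻¹)
      = ((sdI d)⁻¹ * (sdI d)⁻¹) * ((d:ℂ)⁻¹ * (d:ℂ)⁻¹) := by ring
    _ = (d:ℂ)⁻¹ * ((d:ℂ)⁻¹ * (d:ℂ)⁻¹) := by rw [h1]
    _ = ((d:ℂ)^3)⁻¹ := by rw [← mul_inv, ← mul_inv]; congr 1; ring

lemma sdI_inv_sq : (sdI d)⁻¹ * (sdI d)⁻¹ = (d:ℂ)⁻¹ := by rw [← mul_inv, sdI_sq]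

lemma conj_sdI_inv : (starRingEnd ℂ) (sdI d)⁻¹ = (sdI d)⁻¹ := by
  rw [map_inv₀, conj_sdI]

lemma sumC1 (X Y : I4 d) :
    ∑ θ : Fin d → ZMod 3, psiC1 d θ X * (starRingEnd ℂ) (psiC1 d θ Y)
      = (3:ℂ)^d * ((d:ℂ)^3)⁻¹ * cP1 X Y *
        (cP2 X Y + cI2 X Y - cP2 X Y * cI2 X Y) := by
  have hterm : ∀ θ : Fin d → ZMod 3,
      psiC1 d θ X * (starRingEnd ℂ) (psiC1 d θ Y)
        = cP1 X Y * ((d:ℂ)^3)⁻¹ * ec (θ X.1.2 - θ X.2.2 - θ Y.1.2 + θ Y.2.2) := by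
    intro θ
    rw [psiC1, psiC1, map_mul, map_mul, conj_cind, conj_K]
    calc cind (X.1.1 = X.2.1) * ((sdI d)⁻¹ * (d:ℂ)⁻¹) * ec (θ X.1.2 - θ X.2.2) *
          (cind (Y.1.1 = Y.2.1) * ((sdI d)⁻¹ * (d:ℂ)⁻¹) *
            (starRingEnd ℂ) (ec (θ Y.1.2 - θ Y.2.2)))
        = (cind (X.1.1 = X.2.1) * cind (Y.1.1 = Y.2.1)) *
            (((sdI d)⁻¹ * (d:ℂ)⁻¹) * ((sdI d)⁻¹ * (d:ℂ)⁻¹)) *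
            (ec (θ X.1.2 - θ X.2.2) * (starRingEnd ℂ) (ec (θ Y.1.2 - θ Y.2.2))) := by ring
      _ = cP1 X Y * ((d:ℂ)^3)⁻¹ * ec (θ X.1.2 - θ X.2.2 - θ Y.1.2 + θ Y.2.2) := by
          rw [cind_mul_cind, K_sq, ec_mul_conj_ec]
          congr 2
          ring
  rw [Finset.sum_congr rfl (fun θ _ => hterm θ), ← Finset.mul_sum,
    keySum X.1.2 X.2.2 Y.1.2 Y.2.2]
  have hcard : Fintype.card (Fin d) = d := by simp
  rw [hcard, ite_or_cind]
  rw [show cind (X.1.2 = X.2.2 ∧ Y.1.2 = Y.2.2) = cP2 X Y from rfl,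
    show cind (X.1.2 = Y.1.2 ∧ X.2.2 = Y.2.2) = cI2 X Y from rfl,
    show cind ((X.1.2 = X.2.2 ∧ Y.1.2 = Y.2.2) ∧ X.1.2 = Y.1.2 ∧ X.2.2 = Y.2.2)
      = cP2 X Y * cI2 X Y from by rw [cP2, cI2, cind_mul_cind]]
  ring

lemma sumB1 (X Y : I4 d) :
    ∑ θ : Fin d → ZMod 3, psiB1 d θ X * (starRingEnd ℂ) (psiB1 d θ Y)
      = (3:ℂ)^d * ((d:ℂ)^3)⁻¹ * cP2 X Y *
        (cP1 X Y + cI1 X Y - cP1 X Y * cI1 X Y) := by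
  have hterm : ∀ θ : Fin d → ZMod 3,
      psiB1 d θ X * (starRingEnd ℂ) (psiB1 d θ Y)
        = cP2 X Y * ((d:ℂ)^3)⁻¹ * ec (θ X.1.1 - θ X.2.1 - θ Y.1.1 + θ Y.2.1) := by
    intro θ
    rw [psiB1, psiB1, map_mul, map_mul, conj_cind, conj_K]
    calc cind (X.1.2 = X.2.2) * ((sdI d)⁻¹ * (d:ℂ)⁻¹) * ec (θ X.1.1 - θ X.2.1) *
          (cind (Y.1.2 = Y.2.2) * ((sdI d)⁻¹ * (d:ℂ)⁻¹) *
            (starRingEnd ℂ) (ec (θ Y.1.1 - θ Y.2.1)))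
        = (cind (X.1.2 = X.2.2) * cind (Y.1.2 = Y.2.2)) *
            (((sdI d)⁻¹ * (d:ℂ)⁻¹) * ((sdI d)⁻¹ * (d:ℂ)⁻¹)) *
            (ec (θ X.1.1 - θ X.2.1) * (starRingEnd ℂ) (ec (θ Y.1.1 - θ Y.2.1))) := by ring
      _ = cP2 X Y * ((d:ℂ)^3)⁻¹ * ec (θ X.1.1 - θ X.2.1 - θ Y.1.1 + θ Y.2.1) := by
          rw [cind_mul_cind, K_sq, ec_mul_conj_ec]
          congr 2
          ring
  rw [Finset.sum_congr rfl (fun θ _ => hterm θ), ← Finset.mul_sum,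
    keySum X.1.1 X.2.1 Y.1.1 Y.2.1]
  have hcard : Fintype.card (Fin d) = d := by simp
  rw [hcard, ite_or_cind]
  rw [show cind (X.1.1 = X.2.1 ∧ Y.1.1 = Y.2.1) = cP1 X Y from rfl,
    show cind (X.1.1 = Y.1.1 ∧ X.2.1 = Y.2.1) = cI1 X Y from rfl,
    show cind ((X.1.1 = X.2.1 ∧ Y.1.1 = Y.2.1) ∧ X.1.1 = Y.1.1 ∧ X.2.1 = Y.2.1)
      = cP1 X Y * cI1 X Y from by rw [cP1, cI1, cind_mul_cind]]
  ring

lemma triple_iff {α : Type*} (x c a' c' : α) :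
    (x = c ∧ x = a' ∧ x = c') ↔ ((x = c ∧ a' = c') ∧ (x = a' ∧ c = c')) := by
  constructor
  · rintro ⟨h1, h2, h3⟩
    exact ⟨⟨h1, h2.symm.trans h3⟩, ⟨h2, h1.symm.trans h3⟩⟩
  · rintro ⟨⟨h1, h2⟩, ⟨h3, _⟩⟩
    exact ⟨h1, h3, h3.trans h2⟩

lemma sumC2 (X Y : I4 d) :
    ∑ i : Fin d, psiC2 d i X * (starRingEnd ℂ) (psiC2 d i Y)
      = (d:ℂ)⁻¹ * cP1 X Y * (cP2 X Y * cI2 X Y) := by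
  have hterm : ∀ i : Fin d,
      psiC2 d i X * (starRingEnd ℂ) (psiC2 d i Y)
        = if i = X.1.2 then
            (cP1 X Y * (d:ℂ)⁻¹) * (cind (i = X.2.2) * cind (i = Y.1.2) * cind (i = Y.2.2))
          else 0 := by
    intro i
    rw [psiC2, psiC2, map_mul, map_mul, map_mul, conj_cind, conj_cind, conj_cind, conj_sdI_inv]
    by_cases h : i = X.1.2
    · rw [if_pos h]
      calc cind (X.1.1 = X.2.1) * cind (i = X.1.2) * cind (i = X.2.2) * (sdI d)⁻¹ *
            (cind (Y.1.1 = Y.2.1) * cind (i = Y.1.2) * cind (i = Y.2.2) * (sdI d)⁻¹)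
          = (cind (X.1.1 = X.2.1) * cind (Y.1.1 = Y.2.1)) * ((sdI d)⁻¹ * (sdI d)⁻¹) *
            cind (i = X.1.2) *
            (cind (i = X.2.2) * cind (i = Y.1.2) * cind (i = Y.2.2)) := by ring
        _ = _ := by
            rw [cind_mul_cind, sdI_inv_sq, show cind (i = X.1.2) = 1 from by
              rw [cind, if_pos h]]
            rw [cP1]
            ring
    · rw [if_neg h, show cind (i = X.1.2) = 0 from by rw [cind, if_neg h]]
      ring
  rw [Finset.sum_congr rfl (fun i _ => hterm i), Finset.sum_ite_eq' Finset.univ X.1.2,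
    if_pos (Finset.mem_univ _)]
  have h2 : cind (X.1.2 = X.2.2) * cind (X.1.2 = Y.1.2) * cind (X.1.2 = Y.2.2)
      = cP2 X Y * cI2 X Y := by
    rw [cind_mul_cind, cind_mul_cind, cP2, cI2, cind_mul_cind]
    exact cind_congr (by rw [and_assoc]; exact triple_iff _ _ _ _)
  rw [h2]
  ring

lemma sumB2 (X Y : I4 d) :
    ∑ i : Fin d, psiB2 d i X * (starRingEnd ℂ) (psiB2 d i Y)
      = (d:ℂ)⁻¹ * cP2 X Y * (cP1 X Y * cI1 X Y) := by
  have hterm : ∀ i : Fin d,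
      psiB2 d i X * (starRingEnd ℂ) (psiB2 d i Y)
        = if i = X.1.1 then
            (cP2 X Y * (d:ℂ)⁻¹) * (cind (i = X.2.1) * cind (i = Y.1.1) * cind (i = Y.2.1))
          else 0 := by
    intro i
    rw [psiB2, psiB2, map_mul, map_mul, map_mul, conj_cind, conj_cind, conj_cind, conj_sdI_inv]
    by_cases h : i = X.1.1
    · rw [if_pos h]
      calc cind (X.1.2 = X.2.2) * cind (i = X.1.1) * cind (i = X.2.1) * (sdI d)⁻¹ *
            (cind (Y.1.2 = Y.2.2) * cind (i = Y.1.1) * cind (i = Y.2.1) * (sdI d)⁻¹)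
          = (cind (X.1.2 = X.2.2) * cind (Y.1.2 = Y.2.2)) * ((sdI d)⁻¹ * (sdI d)⁻¹) *
            cind (i = X.1.1) *
            (cind (i = X.2.1) * cind (i = Y.1.1) * cind (i = Y.2.1)) := by ring
        _ = _ := by
            rw [cind_mul_cind, sdI_inv_sq, show cind (i = X.1.1) = 1 from by
              rw [cind, if_pos h]]
            rw [cP2]
            ring
    · rw [if_neg h, show cind (i = X.1.1) = 0 from by rw [cind, if_neg h]]
      ring
  rw [Finset.sum_congr rfl (fun i _ => hterm i), Finset.sum_ite_eq' Finset.univ X.1.1,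
    if_pos (Finset.mem_univ _)]
  have h2 : cind (X.1.1 = X.2.1) * cind (X.1.1 = Y.1.1) * cind (X.1.1 = Y.2.1)
      = cP1 X Y * cI1 X Y := by
    rw [cind_mul_cind, cind_mul_cind, cP1, cI1, cind_mul_cind]
    exact cind_congr (by rw [and_assoc]; exact triple_iff _ _ _ _)
  rw [h2]
  ring


lemma sumC3 (X Y : I4 d) :
    ∑ jk : Fin d × Fin d, psiC3 d jk X * (starRingEnd ℂ) (psiC3 d jk Y)
      = (d:ℂ)⁻¹ * cP1 X Y * cI2 X Y := by
  have hterm : ∀ jk : Fin d × Fin d,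
      psiC3 d jk X * (starRingEnd ℂ) (psiC3 d jk Y)
        = (cP1 X Y * (d:ℂ)⁻¹) *
            ((cind (jk.1 = X.1.2) * cind (jk.1 = Y.1.2)) *
             (cind (jk.2 = X.2.2) * cind (jk.2 = Y.2.2))) := by
    intro jk
    rw [psiC3, psiC3, map_mul, map_mul, map_mul, conj_cind, conj_cind, conj_cind, conj_sdI_inv]
    calc cind (X.1.1 = X.2.1) * cind (jk.1 = X.1.2) * cind (jk.2 = X.2.2) * (sdI d)⁻¹ *
          (cind (Y.1.1 = Y.2.1) * cind (jk.1 = Y.1.2) * cind (jk.2 = Y.2.2) * (sdI d)⁻¹)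
        = (cind (X.1.1 = X.2.1) * cind (Y.1.1 = Y.2.1)) * ((sdI d)⁻¹ * (sdI d)⁻¹) *
          ((cind (jk.1 = X.1.2) * cind (jk.1 = Y.1.2)) *
           (cind (jk.2 = X.2.2) * cind (jk.2 = Y.2.2))) := by ring
      _ = _ := by rw [cind_mul_cind, sdI_inv_sq, cP1]
  rw [Finset.sum_congr rfl (fun jk _ => hterm jk), ← Finset.mul_sum]
  have hsplit : ∑ jk : Fin d × Fin d,
      (cind (jk.1 = X.1.2) * cind (jk.1 = Y.1.2)) * (cind (jk.2 = X.2.2) * cind (jk.2 = Y.2.2))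
      = (∑ j : Fin d, cind (j = X.1.2) * cind (j = Y.1.2)) *
        (∑ k : Fin d, cind (k = X.2.2) * cind (k = Y.2.2)) := by
    rw [Finset.sum_mul_sum, Fintype.sum_prod_type]
  have hj : ∑ j : Fin d, cind (j = X.1.2) * cind (j = Y.1.2) = cind (X.1.2 = Y.1.2) := by
    have : ∀ j : Fin d, cind (j = X.1.2) * cind (j = Y.1.2)
        = if j = X.1.2 then cind (j = Y.1.2) else 0 := by
      intro j
      by_cases h : j = X.1.2
      · rw [if_pos h, show cind (j = X.1.2) = 1 from by rw [cind, if_pos h], one_mul]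
      · rw [if_neg h, show cind (j = X.1.2) = 0 from by rw [cind, if_neg h], zero_mul]
    rw [Finset.sum_congr rfl (fun j _ => this j), Finset.sum_ite_eq' Finset.univ X.1.2,
      if_pos (Finset.mem_univ _)]
  have hk : ∑ k : Fin d, cind (k = X.2.2) * cind (k = Y.2.2) = cind (X.2.2 = Y.2.2) := by
    have : ∀ k : Fin d, cind (k = X.2.2) * cind (k = Y.2.2)
        = if k = X.2.2 then cind (k = Y.2.2) else 0 := by
      intro k
      by_cases h : k = X.2.2
      · rw [if_pos h, show cind (k = X.2.2) = 1 from by rw [cind, if_pos h], one_mul]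
      · rw [if_neg h, show cind (k = X.2.2) = 0 from by rw [cind, if_neg h], zero_mul]
    rw [Finset.sum_congr rfl (fun k _ => this k), Finset.sum_ite_eq' Finset.univ X.2.2,
      if_pos (Finset.mem_univ _)]
  rw [hsplit, hj, hk, cI2, cind_mul_cind]
  ring

lemma sumB3 (X Y : I4 d) :
    ∑ jk : Fin d × Fin d, psiB3 d jk X * (starRingEnd ℂ) (psiB3 d jk Y)
      = (d:ℂ)⁻¹ * cP2 X Y * cI1 X Y := by
  have hterm : ∀ jk : Fin d × Fin d,
      psiB3 d jk X * (starRingEnd ℂ) (psiB3 d jk Y)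
        = (cP2 X Y * (d:ℂ)⁻¹) *
            ((cind (jk.1 = X.1.1) * cind (jk.1 = Y.1.1)) *
             (cind (jk.2 = X.2.1) * cind (jk.2 = Y.2.1))) := by
    intro jk
    rw [psiB3, psiB3, map_mul, map_mul, map_mul, conj_cind, conj_cind, conj_cind, conj_sdI_inv]
    calc cind (X.1.2 = X.2.2) * cind (jk.1 = X.1.1) * cind (jk.2 = X.2.1) * (sdI d)⁻¹ *
          (cind (Y.1.2 = Y.2.2) * cind (jk.1 = Y.1.1) * cind (jk.2 = Y.2.1) * (sdI d)⁻¹)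
        = (cind (X.1.2 = X.2.2) * cind (Y.1.2 = Y.2.2)) * ((sdI d)⁻¹ * (sdI d)⁻¹) *
          ((cind (jk.1 = X.1.1) * cind (jk.1 = Y.1.1)) *
           (cind (jk.2 = X.2.1) * cind (jk.2 = Y.2.1))) := by ring
      _ = _ := by rw [cind_mul_cind, sdI_inv_sq, cP2]
  rw [Finset.sum_congr rfl (fun jk _ => hterm jk), ← Finset.mul_sum]
  have hsplit : ∑ jk : Fin d × Fin d,
      (cind (jk.1 = X.1.1) * cind (jk.1 = Y.1.1)) * (cind (jk.2 = X.2.1) * cind (jk.2 = Y.2.1))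
      = (∑ j : Fin d, cind (j = X.1.1) * cind (j = Y.1.1)) *
        (∑ k : Fin d, cind (k = X.2.1) * cind (k = Y.2.1)) := by
    rw [Finset.sum_mul_sum, Fintype.sum_prod_type]
  have hj : ∑ j : Fin d, cind (j = X.1.1) * cind (j = Y.1.1) = cind (X.1.1 = Y.1.1) := by
    have : ∀ j : Fin d, cind (j = X.1.1) * cind (j = Y.1.1)
        = if j = X.1.1 then cind (j = Y.1.1) else 0 := by
      intro j
      by_cases h : j = X.1.1
      · rw [if_pos h, show cind (j = X.1.1) = 1 from by rw [cind, if_pos h], one_mul]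
      · rw [if_neg h, show cind (j = X.1.1) = 0 from by rw [cind, if_neg h], zero_mul]
    rw [Finset.sum_congr rfl (fun j _ => this j), Finset.sum_ite_eq' Finset.univ X.1.1,
      if_pos (Finset.mem_univ _)]
  have hk : ∑ k : Fin d, cind (k = X.2.1) * cind (k = Y.2.1) = cind (X.2.1 = Y.2.1) := by
    have : ∀ k : Fin d, cind (k = X.2.1) * cind (k = Y.2.1)
        = if k = X.2.1 then cind (k = Y.2.1) else 0 := by
      intro k
      by_cases h : k = X.2.1
      · rw [if_pos h, show cind (k = X.2.1) = 1 from by rw [cind, if_pos h], one_mul]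
      · rw [if_neg h, show cind (k = X.2.1) = 0 from by rw [cind, if_neg h], zero_mul]
    rw [Finset.sum_congr rfl (fun k _ => this k), Finset.sum_ite_eq' Finset.univ X.2.1,
      if_pos (Finset.mem_univ _)]
  rw [hsplit, hj, hk, cI1, cind_mul_cind]
  ring

lemma sum0 (X Y : I4 d) :
    ∑ v : I4 d, psi0 d v X * (starRingEnd ℂ) (psi0 d v Y) = cI1 X Y * cI2 X Y := by
  have hterm : ∀ v : I4 d, psi0 d v X * (starRingEnd ℂ) (psi0 d v Y)
      = if v = X then cind (v = Y) else 0 := by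
    intro v
    rw [psi0, psi0, conj_cind]
    by_cases h : v = X
    · rw [if_pos h, show cind (v = X) = 1 from by rw [cind, if_pos h], one_mul]
    · rw [if_neg h, show cind (v = X) = 0 from by rw [cind, if_neg h], zero_mul]
  rw [Finset.sum_congr rfl (fun v _ => hterm v), Finset.sum_ite_eq' Finset.univ X,
    if_pos (Finset.mem_univ _), cI1, cI2, cind_mul_cind]
  exact cind_congr (by
    rw [Prod.ext_iff, Prod.ext_iff, Prod.ext_iff]
    tauto)

lemma sumDD (X Y : I4 d) :
    ∑ ik : Fin d × Fin d, psiDD d ik X * (starRingEnd ℂ) (psiDD d ik Y)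
      = cP1 X Y * cI1 X Y * (cP2 X Y * cI2 X Y) := by
  have hterm : ∀ ik : Fin d × Fin d,
      psiDD d ik X * (starRingEnd ℂ) (psiDD d ik Y)
        = ((cind (ik.1 = X.1.1) * (cind (ik.1 = X.2.1) * cind (ik.1 = Y.1.1) *
            cind (ik.1 = Y.2.1))) *
           (cind (ik.2 = X.1.2) * (cind (ik.2 = X.2.2) * cind (ik.2 = Y.1.2) *
            cind (ik.2 = Y.2.2)))) := by
    intro ik
    rw [psiDD, psiDD, map_mul, map_mul, map_mul, conj_cind, conj_cind, conj_cind, conj_cind]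
    ring
  rw [Finset.sum_congr rfl (fun ik _ => hterm ik)]
  have hsplit : ∑ ik : Fin d × Fin d,
      ((cind (ik.1 = X.1.1) * (cind (ik.1 = X.2.1) * cind (ik.1 = Y.1.1) *
        cind (ik.1 = Y.2.1))) *
       (cind (ik.2 = X.1.2) * (cind (ik.2 = X.2.2) * cind (ik.2 = Y.1.2) *
        cind (ik.2 = Y.2.2))))
      = (∑ i : Fin d, cind (i = X.1.1) * (cind (i = X.2.1) * cind (i = Y.1.1) *
          cind (i = Y.2.1))) *
        (∑ k : Fin d, cind (k = X.1.2) * (cind (k = X.2.2) * cind (k = Y.1.2) *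
          cind (k = Y.2.2))) := by
    rw [Finset.sum_mul_sum, Fintype.sum_prod_type]
  have hi : ∑ i : Fin d, cind (i = X.1.1) * (cind (i = X.2.1) * cind (i = Y.1.1) *
      cind (i = Y.2.1)) = cP1 X Y * cI1 X Y := by
    have h : ∀ i : Fin d, cind (i = X.1.1) * (cind (i = X.2.1) * cind (i = Y.1.1) *
        cind (i = Y.2.1)) = if i = X.1.1 then
          cind (i = X.2.1) * cind (i = Y.1.1) * cind (i = Y.2.1) else 0 := by
      intro i
      by_cases h : i = X.1.1
      · rw [if_pos h, show cind (i = X.1.1) = 1 from by rw [cind, if_pos h], one_mul]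
      · rw [if_neg h, show cind (i = X.1.1) = 0 from by rw [cind, if_neg h], zero_mul]
    rw [Finset.sum_congr rfl (fun i _ => h i), Finset.sum_ite_eq' Finset.univ X.1.1,
      if_pos (Finset.mem_univ _), cind_mul_cind, cind_mul_cind, cP1, cI1, cind_mul_cind]
    refine cind_congr ?_
    rw [and_assoc]
    exact triple_iff _ _ _ _
  have hk : ∑ k : Fin d, cind (k = X.1.2) * (cind (k = X.2.2) * cind (k = Y.1.2) *
      cind (k = Y.2.2)) = cP2 X Y * cI2 X Y := by
    have h : ∀ k : Fin d, cind (k = X.1.2) * (cind (k = X.2.2) * cind (k = Y.1.2) *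
        cind (k = Y.2.2)) = if k = X.1.2 then
          cind (k = X.2.2) * cind (k = Y.1.2) * cind (k = Y.2.2) else 0 := by
      intro k
      by_cases h : k = X.1.2
      · rw [if_pos h, show cind (k = X.1.2) = 1 from by rw [cind, if_pos h], one_mul]
      · rw [if_neg h, show cind (k = X.1.2) = 0 from by rw [cind, if_neg h], zero_mul]
    rw [Finset.sum_congr rfl (fun k _ => h k), Finset.sum_ite_eq' Finset.univ X.1.2,
      if_pos (Finset.mem_univ _), cind_mul_cind, cind_mul_cind, cP2, cI2, cind_mul_cind]
    refine cind_congr ?_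
    rw [and_assoc]
    exact triple_iff _ _ _ _
  rw [hsplit, hi, hk]


-- ---------- normalization lemmas ----------
section norm
variable (hd : 0 < d)

lemma normA (hd : 0 < d) (κ : Fin d × Fin d → ZMod 3) :
    ∑ X : I4 d, Complex.normSq (psiA d κ X) = 1 := by
  have hval : ∀ X : I4 d, Complex.normSq (psiA d κ X) = (((d:ℝ))^4)⁻¹ := by
    intro X
    rw [psiA, Complex.normSq_mul, normSq_ec, mul_one,
      show ((d:ℂ)^2)⁻¹ = ((((d:ℝ)^2)⁻¹ : ℝ) : ℂ) from by push_cast; ring,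
      Complex.normSq_ofReal, ← mul_inv]
    congr 1
    ring
  rw [Finset.sum_congr rfl (fun X _ => hval X), Finset.sum_const, Finset.card_univ]
  have hcard : Fintype.card (I4 d) = d^4 := by
    simp [I4, Fintype.card_prod]
    ring
  rw [hcard, nsmul_eq_mul]
  have hdr : (d:ℝ) ≠ 0 := Nat.cast_ne_zero.mpr hd.ne'
  have hne : ((d:ℝ))^4 ≠ 0 := by positivity
  push_cast
  field_simp

lemma normSq_K : Complex.normSq ((sdI d)⁻¹ * (d:ℂ)⁻¹) = (((d:ℝ))^3)⁻¹ := by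
  rw [Complex.normSq_mul, Complex.normSq_inv, Complex.normSq_inv, Complex.normSq_natCast, sdI,
    Complex.normSq_ofReal, Real.mul_self_sqrt (Nat.cast_nonneg d)]
  rw [← mul_inv]
  congr 1
  ring

lemma sum_I4_cond1 (k : ℝ) :
    ∑ X : I4 d, (if X.1.1 = X.2.1 then k else 0) = d^3 * k := by
  rw [Fintype.sum_prod_type]
  have hinner : ∀ a : Fin d × Fin d,
      ∑ v : Fin d × Fin d, (if a.1 = v.1 then k else 0) = d * k := by
    intro a
    rw [Fintype.sum_prod_type]
    have : ∀ b : Fin d, ∑ _c : Fin d, (if a.1 = b then k else 0)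
        = if a.1 = b then (d:ℝ) * k else 0 := by
      intro b
      by_cases h : a.1 = b
      · simp [h, Finset.sum_const, Finset.card_univ, mul_comm]
      · simp [h]
    rw [Finset.sum_congr rfl (fun b _ => this b), Finset.sum_ite_eq Finset.univ a.1,
      if_pos (Finset.mem_univ _)]
  rw [Finset.sum_congr rfl (fun a _ => hinner a), Finset.sum_const, Finset.card_univ]
  rw [Fintype.card_prod, Fintype.card_fin, nsmul_eq_mul]
  push_cast
  ring

lemma normC1 (hd : 0 < d) (θ : Fin d → ZMod 3) :
    ∑ X : I4 d, Complex.normSq (psiC1 d θ X) = 1 := by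
  have hval : ∀ X : I4 d, Complex.normSq (psiC1 d θ X)
      = if X.1.1 = X.2.1 then (((d:ℝ))^3)⁻¹ else 0 := by
    intro X
    rw [psiC1, Complex.normSq_mul, Complex.normSq_mul, normSq_ec, mul_one, normSq_K]
    by_cases h : X.1.1 = X.2.1
    · rw [if_pos h, show cind (X.1.1 = X.2.1) = 1 from by rw [cind, if_pos h]]
      simp
    · rw [if_neg h, show cind (X.1.1 = X.2.1) = 0 from by rw [cind, if_neg h]]
      simp
  rw [Finset.sum_congr rfl (fun X _ => hval X), sum_I4_cond1]
  have hdr : (d:ℝ) ≠ 0 := Nat.cast_ne_zero.mpr hd.ne'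
  field_simp

lemma sum_I4_cond2 (k : ℝ) :
    ∑ X : I4 d, (if X.1.2 = X.2.2 then k else 0) = d^3 * k := by
  rw [Fintype.sum_prod_type]
  have hinner : ∀ a : Fin d × Fin d,
      ∑ v : Fin d × Fin d, (if a.2 = v.2 then k else 0) = d * k := by
    intro a
    rw [Fintype.sum_prod_type]
    have : ∀ b : Fin d, ∑ c : Fin d, (if a.2 = c then k else 0) = k := by
      intro b
      rw [Finset.sum_ite_eq Finset.univ a.2, if_pos (Finset.mem_univ _)]
    rw [Finset.sum_congr rfl (fun b _ => this b), Finset.sum_const, Finset.card_univ,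
      Fintype.card_fin, nsmul_eq_mul]
  rw [Finset.sum_congr rfl (fun a _ => hinner a), Finset.sum_const, Finset.card_univ,
    Fintype.card_prod, Fintype.card_fin, nsmul_eq_mul]
  push_cast
  ring

lemma normB1 (hd : 0 < d) (θ : Fin d → ZMod 3) :
    ∑ X : I4 d, Complex.normSq (psiB1 d θ X) = 1 := by
  have hval : ∀ X : I4 d, Complex.normSq (psiB1 d θ X)
      = if X.1.2 = X.2.2 then (((d:ℝ))^3)⁻¹ else 0 := by
    intro X
    rw [psiB1, Complex.normSq_mul, Complex.normSq_mul, normSq_ec, mul_one, normSq_K]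
    by_cases h : X.1.2 = X.2.2
    · rw [if_pos h, show cind (X.1.2 = X.2.2) = 1 from by rw [cind, if_pos h]]
      simp
    · rw [if_neg h, show cind (X.1.2 = X.2.2) = 0 from by rw [cind, if_neg h]]
      simp
  rw [Finset.sum_congr rfl (fun X _ => hval X), sum_I4_cond2]
  have hdr : (d:ℝ) ≠ 0 := Nat.cast_ne_zero.mpr hd.ne'
  field_simp

lemma normSq_cind (P : Prop) [Decidable P] :
    Complex.normSq (cind P) = if P then 1 else 0 := by
  by_cases h : P <;> simp [cind, h]

lemma normSq_sdI_inv : Complex.normSq (sdI d)⁻¹ = ((d:ℝ))⁻¹ := by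
  rw [Complex.normSq_inv, sdI, Complex.normSq_ofReal, Real.mul_self_sqrt (Nat.cast_nonneg d)]

lemma normC2 (hd : 0 < d) (i : Fin d) :
    ∑ X : I4 d, Complex.normSq (psiC2 d i X) = 1 := by
  have hval : ∀ X : I4 d, Complex.normSq (psiC2 d i X)
      = (if X.1.1 = X.2.1 then 1 else 0) * (if i = X.1.2 then 1 else 0)
        * (if i = X.2.2 then 1 else 0) * ((d:ℝ))⁻¹ := by
    intro X
    rw [psiC2, Complex.normSq_mul, Complex.normSq_mul, Complex.normSq_mul,
      normSq_cind, normSq_cind, normSq_cind, normSq_sdI_inv]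
  rw [Finset.sum_congr rfl (fun X _ => hval X)]
  have hdr : (d:ℝ) ≠ 0 := Nat.cast_ne_zero.mpr hd.ne'
  simp only [Fintype.sum_prod_type]
  simp [Finset.sum_ite_eq, mul_ite, ite_mul, mul_zero, zero_mul, mul_one, one_mul,
    Finset.sum_const, Finset.card_univ, Fintype.card_fin]
  field_simp

lemma normB2 (hd : 0 < d) (i : Fin d) :
    ∑ X : I4 d, Complex.normSq (psiB2 d i X) = 1 := by
  have hval : ∀ X : I4 d, Complex.normSq (psiB2 d i X)
      = (if X.1.2 = X.2.2 then 1 else 0) * (if i = X.1.1 then 1 else 0)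
        * (if i = X.2.1 then 1 else 0) * ((d:ℝ))⁻¹ := by
    intro X
    rw [psiB2, Complex.normSq_mul, Complex.normSq_mul, Complex.normSq_mul,
      normSq_cind, normSq_cind, normSq_cind, normSq_sdI_inv]
  rw [Finset.sum_congr rfl (fun X _ => hval X)]
  have hdr : (d:ℝ) ≠ 0 := Nat.cast_ne_zero.mpr hd.ne'
  simp only [Fintype.sum_prod_type]
  simp [Finset.sum_ite_eq, mul_ite, ite_mul, mul_zero, zero_mul, mul_one, one_mul,
    Finset.sum_const, Finset.card_univ, Fintype.card_fin]
  field_simp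

lemma normC3 (hd : 0 < d) (jk : Fin d × Fin d) :
    ∑ X : I4 d, Complex.normSq (psiC3 d jk X) = 1 := by
  have hval : ∀ X : I4 d, Complex.normSq (psiC3 d jk X)
      = (if X.1.1 = X.2.1 then 1 else 0) * (if jk.1 = X.1.2 then 1 else 0)
        * (if jk.2 = X.2.2 then 1 else 0) * ((d:ℝ))⁻¹ := by
    intro X
    rw [psiC3, Complex.normSq_mul, Complex.normSq_mul, Complex.normSq_mul,
      normSq_cind, normSq_cind, normSq_cind, normSq_sdI_inv]
  rw [Finset.sum_congr rfl (fun X _ => hval X)]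
  have hdr : (d:ℝ) ≠ 0 := Nat.cast_ne_zero.mpr hd.ne'
  simp only [Fintype.sum_prod_type]
  simp [Finset.sum_ite_eq, mul_ite, ite_mul, mul_zero, zero_mul, mul_one, one_mul,
    Finset.sum_const, Finset.card_univ, Fintype.card_fin]
  field_simp

lemma normB3 (hd : 0 < d) (jk : Fin d × Fin d) :
    ∑ X : I4 d, Complex.normSq (psiB3 d jk X) = 1 := by
  have hval : ∀ X : I4 d, Complex.normSq (psiB3 d jk X)
      = (if X.1.2 = X.2.2 then 1 else 0) * (if jk.1 = X.1.1 then 1 else 0)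
        * (if jk.2 = X.2.1 then 1 else 0) * ((d:ℝ))⁻¹ := by
    intro X
    rw [psiB3, Complex.normSq_mul, Complex.normSq_mul, Complex.normSq_mul,
      normSq_cind, normSq_cind, normSq_cind, normSq_sdI_inv]
  rw [Finset.sum_congr rfl (fun X _ => hval X)]
  have hdr : (d:ℝ) ≠ 0 := Nat.cast_ne_zero.mpr hd.ne'
  simp only [Fintype.sum_prod_type]
  simp [Finset.sum_ite_eq, mul_ite, ite_mul, mul_zero, zero_mul, mul_one, one_mul,
    Finset.sum_const, Finset.card_univ, Fintype.card_fin]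
  field_simp

lemma norm0 (v : I4 d) :
    ∑ X : I4 d, Complex.normSq (psi0 d v X) = 1 := by
  have hval : ∀ X : I4 d, Complex.normSq (psi0 d v X)
      = if v = X then 1 else 0 := by
    intro X
    rw [psi0, normSq_cind]
  rw [Finset.sum_congr rfl (fun X _ => hval X), Finset.sum_ite_eq Finset.univ v,
    if_pos (Finset.mem_univ _)]

lemma normDD (ik : Fin d × Fin d) :
    ∑ X : I4 d, Complex.normSq (psiDD d ik X) = 1 := by
  have hval : ∀ X : I4 d, Complex.normSq (psiDD d ik X)
      = (if ik.1 = X.1.1 then 1 else 0) * (if ik.1 = X.2.1 then 1 else 0)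
        * (if ik.2 = X.1.2 then 1 else 0) * (if ik.2 = X.2.2 then 1 else 0) := by
    intro X
    rw [psiDD, Complex.normSq_mul, Complex.normSq_mul, Complex.normSq_mul,
      normSq_cind, normSq_cind, normSq_cind, normSq_cind]
  rw [Finset.sum_congr rfl (fun X _ => hval X)]
  simp only [Fintype.sum_prod_type]
  simp [Finset.sum_ite_eq, mul_ite, ite_mul, mul_zero, zero_mul, mul_one, one_mul,
    Finset.sum_const, Finset.card_univ, Fintype.card_fin]

end norm

-- ---------- factorization lemmas ----------

lemma factA_psiA (κ : Fin d × Fin d → ZMod 3) : factorsA (psiA d κ) := by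
  refine ⟨fun a => ((d:ℂ)^2)⁻¹ * ec (κ a), fun bc => ec (-κ bc), fun a b c => ?_⟩
  show ((d:ℂ)^2)⁻¹ * ec (κ a - κ (b, c)) = _
  rw [sub_eq_add_neg, ec_add]
  ring

lemma factC_psiC1 (θ : Fin d → ZMod 3) : factorsC (psiC1 d θ) := by
  refine ⟨fun c => ec (-θ c),
    fun ab => cind (ab.1.1 = ab.2) * ((sdI d)⁻¹ * (d:ℂ)⁻¹) * ec (θ ab.1.2), fun a b c => ?_⟩
  show cind (a.1 = b) * ((sdI d)⁻¹ * (d:ℂ)⁻¹) * ec (θ a.2 - θ c) = _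
  rw [sub_eq_add_neg, ec_add]
  ring

lemma factB_psiB1 (θ : Fin d → ZMod 3) : factorsB (psiB1 d θ) := by
  refine ⟨fun b => ec (-θ b),
    fun ac => cind (ac.1.2 = ac.2) * ((sdI d)⁻¹ * (d:ℂ)⁻¹) * ec (θ ac.1.1), fun a b c => ?_⟩
  show cind (a.2 = c) * ((sdI d)⁻¹ * (d:ℂ)⁻¹) * ec (θ a.1 - θ b) = _
  rw [sub_eq_add_neg, ec_add]
  ring

lemma factC_psiC2 (i : Fin d) : factorsC (psiC2 d i) := by
  refine ⟨fun c => cind (i = c),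
    fun ab => cind (ab.1.1 = ab.2) * cind (i = ab.1.2) * (sdI d)⁻¹, fun a b c => ?_⟩
  show cind (a.1 = b) * cind (i = a.2) * cind (i = c) * (sdI d)⁻¹ = _
  ring

lemma factB_psiB2 (i : Fin d) : factorsB (psiB2 d i) := by
  refine ⟨fun b => cind (i = b),
    fun ac => cind (ac.1.2 = ac.2) * cind (i = ac.1.1) * (sdI d)⁻¹, fun a b c => ?_⟩
  show cind (a.2 = c) * cind (i = a.1) * cind (i = b) * (sdI d)⁻¹ = _
  ring

lemma factC_psiC3 (jk : Fin d × Fin d) : factorsC (psiC3 d jk) := by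
  refine ⟨fun c => cind (jk.2 = c),
    fun ab => cind (ab.1.1 = ab.2) * cind (jk.1 = ab.1.2) * (sdI d)⁻¹, fun a b c => ?_⟩
  show cind (a.1 = b) * cind (jk.1 = a.2) * cind (jk.2 = c) * (sdI d)⁻¹ = _
  ring

lemma factB_psiB3 (jk : Fin d × Fin d) : factorsB (psiB3 d jk) := by
  refine ⟨fun b => cind (jk.2 = b),
    fun ac => cind (ac.1.2 = ac.2) * cind (jk.1 = ac.1.1) * (sdI d)⁻¹, fun a b c => ?_⟩
  show cind (a.2 = c) * cind (jk.1 = a.1) * cind (jk.2 = b) * (sdI d)⁻¹ = _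
  ring

lemma factA_psi0 (v : I4 d) : factorsA (psi0 d v) := by
  refine ⟨fun a => cind (v.1 = a), fun bc => cind (v.2 = bc), fun a b c => ?_⟩
  show cind (v = (a, (b, c))) = _
  rw [cind_mul_cind]
  exact cind_congr (by rw [Prod.ext_iff])

lemma factA_psiDD (ik : Fin d × Fin d) : factorsA (psiDD d ik) := by
  refine ⟨fun a => cind (ik.1 = a.1) * cind (ik.2 = a.2),
    fun bc => cind (ik.1 = bc.1) * cind (ik.2 = bc.2), fun a b c => ?_⟩
  show cind (ik.1 = a.1) * cind (ik.1 = b) * cind (ik.2 = a.2) * cind (ik.2 = c) = _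
  ring


end families

-- ---------- weights ----------
section weights
variable (d : ℕ) (p : ℝ)

def lamA : ℝ := max 0 ((d:ℝ)*p*((d:ℝ)*p - 2*(1-p)))
def cphi : ℝ := ((d:ℝ)*p^2 - lamA d p/(d:ℝ))/2
def cii : ℝ := p*(1-p) - cphi d p
def cdd : ℝ := cphi d p/(d:ℝ)
def xii : ℝ := (1-p)^2 - lamA d p
def xdd : ℝ := lamA d p/(d:ℝ)^2

variable {d p}

lemma key_ineq (hd : 2 ≤ d) (hp0 : 0 ≤ p)
    (hp : p ≤ ((1 + Real.sqrt 2) * d - 1) / ((d : ℝ) ^ 2 + 2 * d - 1)) :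
    (d:ℝ)*p ≤ (1 + Real.sqrt 2)*(1-p) := by
  set r := Real.sqrt 2 with hrdef
  have hr : r^2 = 2 := Real.sq_sqrt (by norm_num)
  have hr0 : 0 ≤ r := Real.sqrt_nonneg 2
  have hd2 : (2:ℝ) ≤ (d:ℝ) := by exact_mod_cast hd
  have hDr : (0:ℝ) < (d:ℝ)^2 + 2*d - 1 := by nlinarith
  have h1 : p * ((d:ℝ)^2+2*d-1) ≤ (1+r)*(d:ℝ) - 1 := (le_div_iff₀ hDr).mp hp
  have key : ((1+r)*(d:ℝ) - 1) * ((d:ℝ) + 1 + r) = (1+r) * ((d:ℝ)^2+2*d-1) := by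
    linear_combination (d:ℝ) * hr
  have h2 : p * ((d:ℝ)^2+2*d-1) * ((d:ℝ) + 1 + r) ≤ ((1+r)*(d:ℝ) - 1) * ((d:ℝ) + 1 + r) :=
    mul_le_mul_of_nonneg_right h1 (by nlinarith)
  rw [key] at h2
  have h3 : (p * ((d:ℝ) + 1 + r)) * ((d:ℝ)^2+2*d-1) ≤ (1+r) * ((d:ℝ)^2+2*d-1) := by
    nlinarith [h2]
  have h4 : p * ((d:ℝ) + 1 + r) ≤ 1 + r := le_of_mul_le_mul_right h3 hDr
  nlinarith [h4]

lemma q_nonneg (hd : 2 ≤ d) (hp0 : 0 ≤ p)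
    (hp : p ≤ ((1 + Real.sqrt 2) * d - 1) / ((d : ℝ) ^ 2 + 2 * d - 1)) :
    0 ≤ 1 - p := by
  have h := key_ineq hd hp0 hp
  have hr0 : 0 ≤ Real.sqrt 2 := Real.sqrt_nonneg 2
  have hd2 : (2:ℝ) ≤ (d:ℝ) := by exact_mod_cast hd
  nlinarith [h]

lemma lamA_nonneg : 0 ≤ lamA d p := le_max_left _ _

lemma lamA_le (hd : 2 ≤ d) (hp0 : 0 ≤ p)
    (hp : p ≤ ((1 + Real.sqrt 2) * d - 1) / ((d : ℝ) ^ 2 + 2 * d - 1)) :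
    lamA d p ≤ (1-p)^2 := by
  have hk := key_ineq hd hp0 hp
  have hq := q_nonneg hd hp0 hp
  have hr : (Real.sqrt 2)^2 = 2 := Real.sq_sqrt (by norm_num)
  have hr0 : 0 ≤ Real.sqrt 2 := Real.sqrt_nonneg 2
  have hr1 : 1 ≤ Real.sqrt 2 := by nlinarith
  have hs0 : 0 ≤ (d:ℝ)*p := by positivity
  apply max_le
  · positivity
  · set s := (d:ℝ)*p
    set q := 1 - p
    have h1 : s - (1 + Real.sqrt 2)*q ≤ 0 := by linarith
    have h2 : 0 ≤ s + (Real.sqrt 2 - 1)*q := by nlinarith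
    have h3 := mul_nonpos_of_nonpos_of_nonneg h1 h2
    nlinarith [h3]

lemma cphi_nonneg (hp0 : 0 ≤ p) (hd0 : 0 < d) (hq : 0 ≤ 1 - p) : 0 ≤ cphi d p := by
  have hdr : (0:ℝ) < (d:ℝ) := by exact_mod_cast hd0
  have h1 : lamA d p ≤ (d:ℝ)^2*p^2 := by
    apply max_le
    · positivity
    · nlinarith [mul_nonneg (mul_nonneg hdr.le hp0) hq]
  have h2 : lamA d p/(d:ℝ) ≤ (d:ℝ)*p^2 := by
    rw [div_le_iff₀ hdr]
    nlinarith [h1]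
  rw [cphi]
  linarith

lemma cii_nonneg (hp0 : 0 ≤ p) (hd0 : 0 < d) (hq : 0 ≤ 1 - p) : 0 ≤ cii d p := by
  have hdr : (0:ℝ) < (d:ℝ) := by exact_mod_cast hd0
  have h1 : (d:ℝ)*p*((d:ℝ)*p - 2*(1-p)) ≤ lamA d p := le_max_right _ _
  have h2 : p*((d:ℝ)*p - 2*(1-p)) ≤ lamA d p/(d:ℝ) := by
    rw [le_div_iff₀ hdr]
    nlinarith [h1]
  rw [cii, cphi]
  linarith

lemma xii_nonneg (hd : 2 ≤ d) (hp0 : 0 ≤ p)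
    (hp : p ≤ ((1 + Real.sqrt 2) * d - 1) / ((d : ℝ) ^ 2 + 2 * d - 1)) :
    0 ≤ xii d p := by
  rw [xii, sub_nonneg]
  exact lamA_le hd hp0 hp

lemma cdd_nonneg (hp0 : 0 ≤ p) (hd0 : 0 < d) (hq : 0 ≤ 1 - p) : 0 ≤ cdd d p := by
  have hdr : (0:ℝ) < (d:ℝ) := by exact_mod_cast hd0
  exact div_nonneg (cphi_nonneg hp0 hd0 hq) hdr.le

lemma xdd_nonneg : 0 ≤ xdd d p := by
  have := lamA_nonneg (d := d) (p := p)
  rw [xdd]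
  positivity

lemma weight_total (hd0 : 0 < d) :
    lamA d p + 2*(cphi d p) + 2*(cdd d p) + 2*(cii d p) + xii d p + xdd d p = 1 := by
  have hdr : ((d:ℝ)) ≠ 0 := by positivity
  rw [cii, cdd, xii, xdd, cphi]
  field_simp
  ring

end weights

-- ---------- target definitions (copies) ----------




-- ---------- entry formula for iso and sigma ----------
section entries
variable {d : ℕ} {p : ℝ}

lemma iso_entry (x y : Fin d × Fin d) :
    iso d p x y = (p:ℂ) * (d:ℂ)⁻¹ * cind (x.1 = x.2 ∧ y.1 = y.2)
      + ((1-p : ℝ):ℂ) * ((d:ℂ)^2)⁻¹ * cind (x = y) := by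
  have hcast : (((1 - p) / (d:ℝ)^2 : ℝ) : ℂ) = ((1-p:ℝ):ℂ) * ((d:ℂ)^2)⁻¹ := by
    push_cast; ring
  show (p : ℂ) • phiPlus d x y + (((1 - p) / (d : ℝ) ^ 2 : ℝ) : ℂ) •
    (1 : Matrix (Fin d × Fin d) (Fin d × Fin d) ℂ) x y = _
  rw [Matrix.one_apply, phiPlus, smul_eq_mul, smul_eq_mul, hcast]
  by_cases h1 : x.1 = x.2 ∧ y.1 = y.2 <;> by_cases h2 : x = y <;>
    simp [cind, h1, h2] <;> ring

lemma sigma_entry (X Y : I4 d) :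
    sigmaStar d p X Y
      = ((p:ℂ) * (d:ℂ)⁻¹ * cP1 X Y + ((1-p:ℝ):ℂ) * ((d:ℂ)^2)⁻¹ * cI1 X Y)
        * ((p:ℂ) * (d:ℂ)⁻¹ * cP2 X Y + ((1-p:ℝ):ℂ) * ((d:ℂ)^2)⁻¹ * cI2 X Y) := by
  show iso d p (X.1.1, X.2.1) (Y.1.1, Y.2.1) * iso d p (X.1.2, X.2.2) (Y.1.2, Y.2.2) = _
  rw [iso_entry, iso_entry,
    show cind ((X.1.1, X.2.1) = (Y.1.1, Y.2.1)) = cI1 X Y from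
      cind_congr (by rw [Prod.mk.injEq]),
    show cind ((X.1.2, X.2.2) = (Y.1.2, Y.2.2)) = cI2 X Y from
      cind_congr (by rw [Prod.mk.injEq])]
  rfl

end entries

-- ---------- the index type ----------
abbrev Idx (d : ℕ) : Type :=
  (Fin d × Fin d → ZMod 3) ⊕ (Fin d → ZMod 3) ⊕ (Fin d → ZMod 3) ⊕ Fin d ⊕ Fin d ⊕
   (Fin d × Fin d) ⊕ (Fin d × Fin d) ⊕ I4 d ⊕ (Fin d × Fin d)

def wfun (d : ℕ) (p : ℝ) : Idx d → ℝ
  | .inl _ => lamA d p / 3^(d*d)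
  | .inr (.inl _) => cphi d p / 3^d
  | .inr (.inr (.inl _)) => cphi d p / 3^d
  | .inr (.inr (.inr (.inl _))) => cdd d p / d
  | .inr (.inr (.inr (.inr (.inl _)))) => cdd d p / d
  | .inr (.inr (.inr (.inr (.inr (.inl _))))) => cii d p / d^2
  | .inr (.inr (.inr (.inr (.inr (.inr (.inl _)))))) => cii d p / d^2
  | .inr (.inr (.inr (.inr (.inr (.inr (.inr (.inl _))))))) => xii d p / d^4
  | .inr (.inr (.inr (.inr (.inr (.inr (.inr (.inr _))))))) => xdd d p / d^2

def psifun (d : ℕ) : Idx d → I4 d → ℂ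
  | .inl κ => psiA d κ
  | .inr (.inl θ) => psiC1 d θ
  | .inr (.inr (.inl θ)) => psiB1 d θ
  | .inr (.inr (.inr (.inl i))) => psiC2 d i
  | .inr (.inr (.inr (.inr (.inl i)))) => psiB2 d i
  | .inr (.inr (.inr (.inr (.inr (.inl jk))))) => psiC3 d jk
  | .inr (.inr (.inr (.inr (.inr (.inr (.inl jk)))))) => psiB3 d jk
  | .inr (.inr (.inr (.inr (.inr (.inr (.inr (.inl v))))))) => psi0 d v
  | .inr (.inr (.inr (.inr (.inr (.inr (.inr (.inr ik))))))) => psiDD d ik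


-- ---------- scalar identity ----------
set_option maxHeartbeats 1000000 in
lemma scalar_identity (Dc P Q L CF CI CD XI XD A B C D T3a T3b : ℂ)
    (hdc : Dc ≠ 0) (h3a : T3a ≠ 0) (h3b : T3b ≠ 0)
    (hR1 : L + 2*Dc*CF = Dc^2*P^2) (hR2 : CF + CI = P*Q) (hR3 : Dc*CD = CF)
    (hR4 : L + XI = Q^2) (hR5 : Dc^2*XD = L) :
    (P*Dc⁻¹*A + Q*(Dc^2)⁻¹*B)*(P*Dc⁻¹*C + Q*(Dc^2)⁻¹*D)
    = L/T3a * (T3a * (Dc^4)⁻¹ * (A*C + B*D - A*C*B*D))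
      + (CF/T3b * (T3b * (Dc^3)⁻¹ * A * (C + D - C*D))
      + (CF/T3b * (T3b * (Dc^3)⁻¹ * C * (A + B - A*B))
      + (CD/Dc * (Dc⁻¹ * A * (C*D))
      + (CD/Dc * (Dc⁻¹ * C * (A*B))
      + (CI/Dc^2 * (Dc⁻¹ * A * D)
      + (CI/Dc^2 * (Dc⁻¹ * C * B)
      + (XI/Dc^4 * (B*D)
      + XD/Dc^2 * (A*B*(C*D))))))))) := by
  have t1 : ∀ W : ℂ, L/T3a * (T3a * (Dc^4)⁻¹ * W) = L * W / Dc^4 := by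
    intro W; field_simp
  have t2 : ∀ W : ℂ, CF/T3b * (T3b * (Dc^3)⁻¹ * A * W) = CF * (A * W) / Dc^3 := by
    intro W; field_simp
  have t2' : ∀ W : ℂ, CF/T3b * (T3b * (Dc^3)⁻¹ * C * W) = CF * (C * W) / Dc^3 := by
    intro W; field_simp
  rw [t1, t2, t2']
  simp only [div_eq_mul_inv, ← inv_pow]
  set E := Dc⁻¹ with hEdef
  have hE : Dc * E = 1 := mul_inv_cancel₀ hdc
  linear_combination -((E^4*A*C)*hR1 + (E^3*(A*D+B*C))*hR2 + (E^3*(A*C*D+A*B*C))*hR3 +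
    (E^4*B*D)*hR4 + (E^4*A*B*(C*D))*hR5) +
    (XD*E^2*A*B*C*D*(Dc*E+1) - P^2*A*C*E^2*(Dc*E+1)
      + CD*(A*B*C+A*C*D)*E^2 + 2*CF*A*C*E^3)*hE

-- ---------- the main matrix identity ----------
lemma main_sum (d : ℕ) (p : ℝ) (hd : 0 < d) :
    sigmaStar d p = ∑ t : Idx d, ((wfun d p t : ℝ) : ℂ) • vecProj (psifun d t) := by
  have hdc : ((d:ℕ):ℂ) ≠ 0 := Nat.cast_ne_zero.mpr hd.ne'
  have h3c : ((3:ℂ))^(d*d) ≠ 0 := by norm_num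
  have h3c' : ((3:ℂ))^d ≠ 0 := by norm_num
  funext X Y
  have happ : (∑ t : Idx d, ((wfun d p t : ℝ) : ℂ) • vecProj (psifun d t)) X Y
      = ∑ t : Idx d, ((wfun d p t : ℝ):ℂ) *
          (psifun d t X * (starRingEnd ℂ) (psifun d t Y)) := by
    rw [Matrix.sum_apply]
    exact Finset.sum_congr rfl (fun t _ => rfl)
  rw [happ]
  rw [Fintype.sum_sum_type, Fintype.sum_sum_type, Fintype.sum_sum_type, Fintype.sum_sum_type,
    Fintype.sum_sum_type, Fintype.sum_sum_type, Fintype.sum_sum_type, Fintype.sum_sum_type]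
  simp only [wfun, psifun]
  rw [← Finset.mul_sum, ← Finset.mul_sum, ← Finset.mul_sum, ← Finset.mul_sum,
    ← Finset.mul_sum, ← Finset.mul_sum, ← Finset.mul_sum, ← Finset.mul_sum, ← Finset.mul_sum]
  rw [sumA, sumC1, sumB1, sumC2, sumB2, sumC3, sumB3, sum0, sumDD, sigma_entry]
  -- scalar relations
  have hR1r : lamA d p + 2*(d:ℝ)*cphi d p = (d:ℝ)^2*p^2 := by
    have hdr : ((d:ℝ)) ≠ 0 := Nat.cast_ne_zero.mpr hd.ne'
    rw [cphi]
    field_simp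
    ring
  have hR3r : (d:ℝ)*cdd d p = cphi d p := by
    have hdr : ((d:ℝ)) ≠ 0 := Nat.cast_ne_zero.mpr hd.ne'
    rw [cdd]
    field_simp
  have hR5r : (d:ℝ)^2*xdd d p = lamA d p := by
    have hdr : ((d:ℝ)) ≠ 0 := Nat.cast_ne_zero.mpr hd.ne'
    rw [xdd]
    field_simp
  have hR1 : ((lamA d p : ℝ):ℂ) + 2*(d:ℂ)*((cphi d p : ℝ):ℂ) = (d:ℂ)^2*((p:ℝ):ℂ)^2 := by
    exact_mod_cast hR1r
  have hR2 : ((cphi d p : ℝ):ℂ) + ((cii d p : ℝ):ℂ) = ((p:ℝ):ℂ)*((1-p:ℝ):ℂ) := by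
    have : cphi d p + cii d p = p*(1-p) := by rw [cii]; ring
    exact_mod_cast this
  have hR3 : (d:ℂ)*((cdd d p : ℝ):ℂ) = ((cphi d p : ℝ):ℂ) := by exact_mod_cast hR3r
  have hR4 : ((lamA d p : ℝ):ℂ) + ((xii d p : ℝ):ℂ) = ((1-p:ℝ):ℂ)^2 := by
    have : lamA d p + xii d p = (1-p)^2 := by rw [xii]; ring
    exact_mod_cast this
  have hR5 : (d:ℂ)^2*((xdd d p : ℝ):ℂ) = ((lamA d p : ℝ):ℂ) := by exact_mod_cast hR5r
  have hwA : ((lamA d p / 3^(d*d) : ℝ):ℂ) = ((lamA d p : ℝ):ℂ)/(3:ℂ)^(d*d) := by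
    push_cast; ring
  have hwC1 : ((cphi d p / 3^d : ℝ):ℂ) = ((cphi d p : ℝ):ℂ)/(3:ℂ)^d := by push_cast; ring
  have hwC2 : ((cdd d p / d : ℝ):ℂ) = ((cdd d p : ℝ):ℂ)/(d:ℂ) := by push_cast; ring
  have hwC3 : ((cii d p / d^2 : ℝ):ℂ) = ((cii d p : ℝ):ℂ)/(d:ℂ)^2 := by push_cast; ring
  have hw0 : ((xii d p / d^4 : ℝ):ℂ) = ((xii d p : ℝ):ℂ)/(d:ℂ)^4 := by push_cast; ring
  have hwDD : ((xdd d p / d^2 : ℝ):ℂ) = ((xdd d p : ℝ):ℂ)/(d:ℂ)^2 := by push_cast; ring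
  rw [hwA, hwC1, hwC2, hwC3, hw0, hwDD]
  exact scalar_identity (d:ℂ) (p:ℂ) ((1-p:ℝ):ℂ) _ _ _ _ _ _
    (cP1 X Y) (cI1 X Y) (cP2 X Y) (cI2 X Y) _ _ hdc h3c h3c' hR1 hR2 hR3 hR4 hR5



end StarBisep

open StarBisep in
/-- For `d ≥ 2`, if `p ≤ ((1+√2)d − 1)/(d² + 2d − 1)`, then the `d`-dimensional star PEN
state `σ_star(p)` is biseparable with respect to the tripartition `A|B|C`. -/
theorem sigmaStar_biseparable (d : ℕ) (hd : 2 ≤ d) (p : ℝ) (hp0 : 0 ≤ p)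
    (hp : p ≤ ((1 + Real.sqrt 2) * d - 1) / ((d : ℝ) ^ 2 + 2 * d - 1)) :
    Bisep3 (sigmaStar d p) := by
  have hd0 : 0 < d := lt_of_lt_of_le two_pos hd
  have hq : 0 ≤ 1 - p := q_nonneg hd hp0 hp
  have hdr : (0:ℝ) < (d:ℝ) := by exact_mod_cast hd0
  have hL0 : 0 ≤ lamA d p := lamA_nonneg
  have hCF0 : 0 ≤ cphi d p := cphi_nonneg hp0 hd0 hq
  have hCI0 : 0 ≤ cii d p := cii_nonneg hp0 hd0 hq
  have hCD0 : 0 ≤ cdd d p := cdd_nonneg hp0 hd0 hq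
  have hXI0 : 0 ≤ xii d p := xii_nonneg hd hp0 hp
  have hXD0 : 0 ≤ xdd d p := xdd_nonneg
  set e := Fintype.equivFin (Idx d) with he
  refine ⟨Fintype.card (Idx d), fun t => wfun d p (e.symm t), fun t => psifun d (e.symm t),
    ?_, ?_, ?_, ?_, ?_⟩
  · have hw : ∀ s : Idx d, 0 ≤ wfun d p s := by
      intro s
      rcases s with κ | θ | θ | i | i | jk | jk | v | ik <;> simp only [wfun] <;>
        first
          | exact div_nonneg hL0 (by positivity)
          | exact div_nonneg hCF0 (by positivity)
          | exact div_nonneg hCD0 (by positivity)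
          | exact div_nonneg hCI0 (by positivity)
          | exact div_nonneg hXI0 (by positivity)
          | exact div_nonneg hXD0 (by positivity)
    exact fun t => hw (e.symm t)
  · rw [Equiv.sum_comp e.symm (wfun d p)]
    rw [Fintype.sum_sum_type, Fintype.sum_sum_type, Fintype.sum_sum_type, Fintype.sum_sum_type,
      Fintype.sum_sum_type, Fintype.sum_sum_type, Fintype.sum_sum_type, Fintype.sum_sum_type]
    simp only [wfun, Finset.sum_const, Finset.card_univ, nsmul_eq_mul,
      Fintype.card_fun, Fintype.card_prod, Fintype.card_fin, ZMod.card]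
    push_cast
    have h3a : ((3:ℝ))^(d*d) ≠ 0 := by positivity
    have h3b : ((3:ℝ))^d ≠ 0 := by positivity
    have hdne : ((d:ℝ)) ≠ 0 := hdr.ne'
    have e1 : (3:ℝ)^(d*d) * (lamA d p / 3^(d*d)) = lamA d p := by field_simp
    have e2 : (3:ℝ)^d * (cphi d p / 3^d) = cphi d p := by field_simp
    have e3 : (d:ℝ) * (cdd d p / d) = cdd d p := by field_simp
    have e4 : (d:ℝ) * (d:ℝ) * (cii d p / d^2) = cii d p := by field_simp
    have e5 : (d:ℝ) * (d:ℝ) * ((d:ℝ) * (d:ℝ)) * (xii d p / d^4) = xii d p := by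
      field_simp
    have e6 : (d:ℝ) * (d:ℝ) * (xdd d p / d^2) = xdd d p := by field_simp
    rw [e1, e2, e3, e4, e5, e6]
    have := weight_total (d := d) (p := p) hd0
    linarith
  · have hf : ∀ s : Idx d, factorsA (psifun d s) ∨ factorsB (psifun d s) ∨
        factorsC (psifun d s) := by
      intro s
      rcases s with κ | θ | θ | i | i | jk | jk | v | ik
      · exact Or.inl (factA_psiA d κ)
      · exact Or.inr (Or.inr (factC_psiC1 d θ))
      · exact Or.inr (Or.inl (factB_psiB1 d θ))
      · exact Or.inr (Or.inr (factC_psiC2 d i))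
      · exact Or.inr (Or.inl (factB_psiB2 d i))
      · exact Or.inr (Or.inr (factC_psiC3 d jk))
      · exact Or.inr (Or.inl (factB_psiB3 d jk))
      · exact Or.inl (factA_psi0 d v)
      · exact Or.inl (factA_psiDD d ik)
    exact fun t => hf (e.symm t)
  · have hn : ∀ s : Idx d, ∑ x, Complex.normSq (psifun d s x) = 1 := by
      intro s
      rcases s with κ | θ | θ | i | i | jk | jk | v | ik
      · exact normA d hd0 κ
      · exact normC1 d hd0 θ
      · exact normB1 d hd0 θ
      · exact normC2 d hd0 i
      · exact normB2 d hd0 i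
      · exact normC3 d hd0 jk
      · exact normB3 d hd0 jk
      · exact norm0 d v
      · exact normDD d ik
    exact fun t => hn (e.symm t)
  · rw [main_sum d p hd0]
    exact (Equiv.sum_comp e.symm (fun s => ((wfun d p s : ℝ):ℂ) • vecProj (psifun d s))).symm
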